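/- Let G be a connected weighted graph on n ≥ 2 vertices with Laplacian L_G, and let H be a weighted graph on the same vertices whose Laplacian L_H makes it a (1±ε)-spectral sparsifier of G with 0 ≤ ε < 1. Let γ > 0, 1 ≤ l ≤ n−1, let y ∈ ℝⁿ satisfy |y_i| ≤ k for all i, and assume lγ(1−ε)λ₁ > 1. If S and S' are two size-l subsets of {1,…,n} differing in exactly one element, then the sparse-HFS hypotheses satisfy ‖f̃_S − f̃_{S'}‖₂ ≤ 1.5·k·√l/(lγ(1−ε)λ₁ − 1)² + √2·k/(lγ(1−ε)λ₁ − 1). -/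

import Mathlib

open Matrix BigOperators Finset
open scoped Classical

noncomputable section

/-- The Laplacian of a weighted graph given by its adjacency matrix. -/
def Lap {n : ℕ} (A : Matrix (Fin n) (Fin n) ℝ) : Matrix (Fin n) (Fin n) ℝ :=
  Matrix.diagonal (fun i => ∑ j, A i j) - A

/-- `A` is a weighted graph adjacency matrix: symmetric, nonnegative, zero diagonal. -/
def IsWeightedGraph {n : ℕ} (A : Matrix (Fin n) (Fin n) ℝ) : Prop :=
  A.IsSymm ∧ (∀ i j, 0 ≤ A i j) ∧ (∀ i, A i i = 0)

/-- The graph with edge set `{(i,j) : A i j > 0}` is connected. -/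
def GraphConnected {n : ℕ} (A : Matrix (Fin n) (Fin n) ℝ) : Prop :=
  (SimpleGraph.fromRel (fun i j => 0 < A i j)).Connected

/-- `LH` is the Laplacian of a `(1±ε)`-spectral sparsifier of the graph with Laplacian `LG`. -/
def IsSparsifier {n : ℕ} (LG LH : Matrix (Fin n) (Fin n) ℝ) (ε : ℝ) : Prop :=
  ∀ x : Fin n → ℝ,
    (1 - ε) * (x ⬝ᵥ LG.mulVec x) ≤ x ⬝ᵥ LH.mulVec x ∧
    x ⬝ᵥ LH.mulVec x ≤ (1 + ε) * (x ⬝ᵥ LG.mulVec x)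

/-- Orthogonal projection `I - (1/n)·1·1ᵀ` onto `F = {f : ⟨f,1⟩ = 0}`. -/
def PF (n : ℕ) : Matrix (Fin n) (Fin n) ℝ :=
  1 - (n : ℝ)⁻¹ • Matrix.of (fun _ _ => (1 : ℝ))

/-- Diagonal 0/1 matrix selecting the coordinates in `S`. -/
def IS {n : ℕ} (S : Finset (Fin n)) : Matrix (Fin n) (Fin n) ℝ :=
  Matrix.diagonal (fun i => if i ∈ S then (1 : ℝ) else 0)

/-- Euclidean norm of a vector. -/
def vnorm {n : ℕ} (x : Fin n → ℝ) : ℝ := Real.sqrt (∑ i, (x i) ^ 2)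

/-- `lam` is the smallest eigenvalue of `L` restricted to `F = {x : ⟨x,1⟩ = 0}`, i.e. the
minimum of the Rayleigh quotient over nonzero vectors of `F`. -/
def IsLam1 {n : ℕ} (L : Matrix (Fin n) (Fin n) ℝ) (lam : ℝ) : Prop :=
  IsLeast {r | ∃ x : Fin n → ℝ, x ≠ 0 ∧ (∑ i, x i) = 0 ∧
    r = (x ⬝ᵥ L.mulVec x) / (∑ i, (x i) ^ 2)} lam

/-- `lam` is the largest eigenvalue of `L`: the maximum of the Rayleigh quotient. -/
def IsLamN {n : ℕ} (L : Matrix (Fin n) (Fin n) ℝ) (lam : ℝ) : Prop :=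
  IsGreatest {r | ∃ x : Fin n → ℝ, x ≠ 0 ∧
    r = (x ⬝ᵥ L.mulVec x) / (∑ i, (x i) ^ 2)} lam

/-- `Lp` is the Moore–Penrose pseudoinverse of `L`. -/
def IsMoorePenrose {n : ℕ} (L Lp : Matrix (Fin n) (Fin n) ℝ) : Prop :=
  L * Lp * L = L ∧ Lp * L * Lp = Lp ∧ (L * Lp).IsSymm ∧ (Lp * L).IsSymm

/-- The stability constant `β` of sparse-HFS. -/
def betaHFS (l : ℕ) (γ ε lam1 k : ℝ) : ℝ :=
  1.5 * k * Real.sqrt l / ((l : ℝ) * γ * (1 - ε) * lam1 - 1) ^ 2 +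
  Real.sqrt 2 * k / ((l : ℝ) * γ * (1 - ε) * lam1 - 1)

/-- `π(l,u) = (lu/(l+u-0.5))·(1/(1 - 1/(2·max{l,u})))`. -/
def piLU (l u : ℕ) : ℝ :=
  ((l : ℝ) * u / ((l : ℝ) + u - 0.5)) * (1 / (1 - 1 / (2 * ((max l u : ℕ) : ℝ))))


lemma sum_mul_le_sqrt {ι : Type*} (s : Finset ι) (f g : ι → ℝ) :
    ∑ i ∈ s, f i * g i ≤ Real.sqrt (∑ i ∈ s, f i ^ 2) * Real.sqrt (∑ i ∈ s, g i ^ 2) := by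
  have h := Finset.sum_mul_sq_le_sq_mul_sq s f g
  have h1 : (0:ℝ) ≤ ∑ i ∈ s, f i ^ 2 := Finset.sum_nonneg fun i _ => sq_nonneg _
  calc ∑ i ∈ s, f i * g i ≤ |∑ i ∈ s, f i * g i| := le_abs_self _
    _ = Real.sqrt ((∑ i ∈ s, f i * g i) ^ 2) := (Real.sqrt_sq_eq_abs _).symm
    _ ≤ Real.sqrt ((∑ i ∈ s, f i ^ 2) * ∑ i ∈ s, g i ^ 2) := Real.sqrt_le_sqrt h
    _ = _ := Real.sqrt_mul h1 _

lemma cauchy2 (x1 x2 a b : ℝ) :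
    x1 * a + x2 * b ≤ Real.sqrt (x1^2 + x2^2) * Real.sqrt (a^2 + b^2) := by
  have h1 : (0:ℝ) ≤ x1^2 + x2^2 := by positivity
  calc x1 * a + x2 * b ≤ |x1 * a + x2 * b| := le_abs_self _
    _ = Real.sqrt ((x1 * a + x2 * b) ^ 2) := (Real.sqrt_sq_eq_abs _).symm
    _ ≤ Real.sqrt ((x1^2 + x2^2) * (a^2 + b^2)) := by
        apply Real.sqrt_le_sqrt; nlinarith [sq_nonneg (x1*b - x2*a)]
    _ = _ := Real.sqrt_mul h1 _

lemma PF_mulVec {n : ℕ} (w : Fin n → ℝ) :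
    (PF n).mulVec w = fun i => w i - (n:ℝ)⁻¹ * ∑ j, w j := by
  funext i
  simp only [PF, sub_mulVec, one_mulVec, smul_mulVec, Pi.sub_apply, Pi.smul_apply,
    smul_eq_mul]
  congr 1
  simp [mulVec, dotProduct, Finset.mul_sum]

lemma dot_PF {n : ℕ} (x w : Fin n → ℝ) (hx : ∑ i, x i = 0) :
    x ⬝ᵥ (PF n).mulVec w = x ⬝ᵥ w := by
  rw [PF_mulVec]
  simp only [dotProduct, mul_sub, Finset.sum_sub_distrib]
  rw [← Finset.sum_mul, hx]
  ring_nf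

lemma IS_dot {n : ℕ} (T : Finset (Fin n)) (x z : Fin n → ℝ) :
    x ⬝ᵥ (IS T).mulVec z = ∑ i ∈ T, x i * z i := by
  simp only [IS, dotProduct, mulVec_diagonal]
  have h : ∀ i, x i * ((if i ∈ T then (1:ℝ) else 0) * z i) = if i ∈ T then x i * z i else 0 := by
    intro i; split_ifs <;> ring
  simp_rw [h]
  rw [Finset.sum_ite_mem, Finset.univ_inter]

set_option maxHeartbeats 1000000 in
/-- stability of sparse-HFS: if `S, S'` differ in exactly one element then
`‖f̃_S − f̃_{S'}‖ ≤ 1.5·k·√l/(lγ(1−ε)λ₁ − 1)² + √2·k/(lγ(1−ε)λ₁ − 1)`. -/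
theorem stmt_2 {n : ℕ} (hn : 2 ≤ n)
    (AG AH : Matrix (Fin n) (Fin n) ℝ)
    (hG : IsWeightedGraph AG) (hGc : GraphConnected AG)
    (hH : IsWeightedGraph AH)
    (ε : ℝ) (hε0 : 0 ≤ ε) (hε1 : ε < 1)
    (hsp : IsSparsifier (Lap AG) (Lap AH) ε)
    (γ : ℝ) (hγ : 0 < γ)
    (l : ℕ) (hl : 1 ≤ l) (hln : l ≤ n - 1)
    (y : Fin n → ℝ) (k : ℝ) (hy : ∀ i, |y i| ≤ k)
    (lam1 : ℝ) (hlam1 : IsLam1 (Lap AG) lam1)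
    (hmain : 1 < (l : ℝ) * γ * (1 - ε) * lam1)
    (S S' : Finset (Fin n)) (hS : S.card = l) (hS' : S'.card = l)
    (hdiff : (S \ S').card = 1) (hdiff' : (S' \ S).card = 1)
    (ft ft' : Fin n → ℝ)
    (hft : (∑ i, ft i = 0) ∧
      (PF n).mulVec ((((l : ℝ) * γ) • Lap AH + IS S).mulVec ft) =
        (PF n).mulVec ((IS S).mulVec y))
    (hft' : (∑ i, ft' i = 0) ∧
      (PF n).mulVec ((((l : ℝ) * γ) • Lap AH + IS S').mulVec ft') =
        (PF n).mulVec ((IS S').mulVec y)) :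
    vnorm (ft - ft') ≤
      1.5 * k * Real.sqrt l / ((l : ℝ) * γ * (1 - ε) * lam1 - 1) ^ 2 +
        Real.sqrt 2 * k / ((l : ℝ) * γ * (1 - ε) * lam1 - 1) := by
  obtain ⟨hft0, hfteq⟩ := hft
  obtain ⟨hft0', hfteq'⟩ := hft'
  have hl0 : (0:ℝ) < l := by exact_mod_cast hl
  have hε' : (0:ℝ) < 1 - ε := by linarith
  set c : ℝ := (l : ℝ) * γ * (1 - ε) * lam1 with hcdef
  have hc1 : (1:ℝ) < c := hmain
  have hc0 : (0:ℝ) < c := by linarith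
  have hcm : (0:ℝ) < c - 1 := by linarith
  have hk : 0 ≤ k := le_trans (abs_nonneg _) (hy ⟨0, by omega⟩)
  have hsl : (0:ℝ) ≤ Real.sqrt l := Real.sqrt_nonneg _
  -- Rayleigh quotient bound
  have hRay : ∀ x : Fin n → ℝ, (∑ i, x i) = 0 →
      lam1 * (∑ i, x i ^ 2) ≤ x ⬝ᵥ (Lap AG).mulVec x := by
    intro x hx
    by_cases hx0 : x = 0
    · subst hx0; simp [dotProduct]
    · obtain ⟨i, hi⟩ := Function.ne_iff.mp hx0
      have hs : 0 < ∑ j, x j ^ 2 := by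
        have h1 : 0 < x i ^ 2 := lt_of_le_of_ne (sq_nonneg _) (Ne.symm (pow_ne_zero 2 hi))
        exact Finset.sum_pos' (fun j _ => sq_nonneg _) ⟨i, Finset.mem_univ i, h1⟩
      have hle : lam1 ≤ (x ⬝ᵥ (Lap AG).mulVec x) / (∑ j, x j ^ 2) :=
        hlam1.2 ⟨x, hx0, hx, rfl⟩
      calc lam1 * ∑ j, x j ^ 2
          ≤ ((x ⬝ᵥ (Lap AG).mulVec x) / ∑ j, x j ^ 2) * ∑ j, x j ^ 2 :=
            mul_le_mul_of_nonneg_right hle hs.le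
        _ = x ⬝ᵥ (Lap AG).mulVec x := div_mul_cancel₀ _ hs.ne'
  -- sparsified quadratic form lower bound
  have hQ : ∀ x : Fin n → ℝ, (∑ i, x i) = 0 →
      c * (∑ i, x i ^ 2) ≤ ((l:ℝ) * γ) * (x ⬝ᵥ (Lap AH).mulVec x) := by
    intro x hx
    have h1 := (hsp x).1
    have h2 := hRay x hx
    calc c * (∑ i, x i ^ 2) = ((l:ℝ)*γ) * ((1-ε) * (lam1 * ∑ i, x i ^ 2)) := by
          rw [hcdef]; ring
      _ ≤ ((l:ℝ)*γ) * ((1-ε) * (x ⬝ᵥ (Lap AG).mulVec x)) := by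
          apply mul_le_mul_of_nonneg_left _ (by positivity)
          exact mul_le_mul_of_nonneg_left h2 hε'.le
      _ ≤ ((l:ℝ)*γ) * (x ⬝ᵥ (Lap AH).mulVec x) :=
          mul_le_mul_of_nonneg_left h1 (by positivity)
  -- norm of ft'
  set N' : ℝ := vnorm ft' with hN'def
  have hN'0 : 0 ≤ N' := Real.sqrt_nonneg _
  have hN'sq : N' ^ 2 = ∑ i, ft' i ^ 2 :=
    Real.sq_sqrt (Finset.sum_nonneg fun i _ => sq_nonneg _)
  have hstep1 : c * N' ^ 2 ≤ N' * (k * Real.sqrt l) := by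
    have e1 : ft' ⬝ᵥ ((((l : ℝ) * γ) • Lap AH + IS S').mulVec ft')
        = ft' ⬝ᵥ ((IS S').mulVec y) := by
      have h := congrArg (fun w => ft' ⬝ᵥ w) hfteq'
      rwa [dot_PF _ _ hft0', dot_PF _ _ hft0'] at h
    rw [add_mulVec, dotProduct_add, smul_mulVec, dotProduct_smul, smul_eq_mul] at e1
    have hnn : 0 ≤ ft' ⬝ᵥ (IS S').mulVec ft' := by
      rw [IS_dot]; exact Finset.sum_nonneg fun i _ => mul_self_nonneg _
    have h2 : c * N' ^ 2 ≤ ft' ⬝ᵥ (IS S').mulVec y := by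
      rw [hN'sq]
      have := hQ ft' hft0'
      linarith
    have h3 : ft' ⬝ᵥ (IS S').mulVec y ≤ N' * (k * Real.sqrt l) := by
      rw [IS_dot]
      have hcs := sum_mul_le_sqrt S' ft' y
      have hA : Real.sqrt (∑ i ∈ S', ft' i ^ 2) ≤ N' := by
        rw [hN'def]
        exact Real.sqrt_le_sqrt (Finset.sum_le_sum_of_subset_of_nonneg
          (Finset.subset_univ _) (fun i _ _ => sq_nonneg _))
      have hB : Real.sqrt (∑ i ∈ S', y i ^ 2) ≤ k * Real.sqrt l := by
        have hsum : ∑ i ∈ S', y i ^ 2 ≤ (l:ℝ) * k ^ 2 := by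
          calc ∑ i ∈ S', y i ^ 2 ≤ ∑ _i ∈ S', k ^ 2 := by
                apply Finset.sum_le_sum
                intro i _
                have h := pow_le_pow_left₀ (abs_nonneg (y i)) (hy i) 2
                rwa [sq_abs] at h
            _ = (l:ℝ) * k ^ 2 := by
                rw [Finset.sum_const, hS', nsmul_eq_mul]
        calc Real.sqrt (∑ i ∈ S', y i ^ 2) ≤ Real.sqrt ((l:ℝ) * k ^ 2) :=
              Real.sqrt_le_sqrt hsum
          _ = k * Real.sqrt l := by
              rw [Real.sqrt_mul hl0.le, Real.sqrt_sq hk]; ring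
      calc ∑ i ∈ S', ft' i * y i
          ≤ Real.sqrt (∑ i ∈ S', ft' i ^ 2) * Real.sqrt (∑ i ∈ S', y i ^ 2) := hcs
        _ ≤ N' * (k * Real.sqrt l) :=
            mul_le_mul hA hB (Real.sqrt_nonneg _) hN'0
    linarith
  have hbound' : N' ≤ k * Real.sqrt l / c := by
    rcases eq_or_lt_of_le hN'0 with h | h
    · rw [← h]; exact div_nonneg (mul_nonneg hk hsl) hc0.le
    · rw [le_div_iff₀ hc0]
      nlinarith [hstep1]
  -- difference vector
  set Δ : Fin n → ℝ := ft - ft' with hΔdef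
  have hΔ0 : ∑ i, Δ i = 0 := by
    simp only [hΔdef, Pi.sub_apply, Finset.sum_sub_distrib, hft0, hft0', sub_zero]
  have hNΔ0 : 0 ≤ vnorm Δ := Real.sqrt_nonneg _
  have hNΔsq : vnorm Δ ^ 2 = ∑ i, Δ i ^ 2 :=
    Real.sq_sqrt (Finset.sum_nonneg fun i _ => sq_nonneg _)
  -- the two special vertices
  obtain ⟨u, hu⟩ := Finset.card_eq_one.mp hdiff
  obtain ⟨v, hv⟩ := Finset.card_eq_one.mp hdiff'
  have huS : u ∈ S ∧ u ∉ S' := Finset.mem_sdiff.mp (hu ▸ Finset.mem_singleton_self u)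
  have hvS : v ∈ S' ∧ v ∉ S := Finset.mem_sdiff.mp (hv ▸ Finset.mem_singleton_self v)
  have huv : u ≠ v := fun h => hvS.2 (h ▸ huS.1)
  -- scalar equation
  have e1 : Δ ⬝ᵥ ((((l : ℝ) * γ) • Lap AH + IS S).mulVec ft) = Δ ⬝ᵥ ((IS S).mulVec y) := by
    have h := congrArg (fun w => Δ ⬝ᵥ w) hfteq
    rwa [dot_PF _ _ hΔ0, dot_PF _ _ hΔ0] at h
  have e2 : Δ ⬝ᵥ ((((l : ℝ) * γ) • Lap AH + IS S').mulVec ft') = Δ ⬝ᵥ ((IS S').mulVec y) := by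
    have h := congrArg (fun w => Δ ⬝ᵥ w) hfteq'
    rwa [dot_PF _ _ hΔ0, dot_PF _ _ hΔ0] at h
  rw [add_mulVec, dotProduct_add, smul_mulVec, dotProduct_smul, smul_eq_mul] at e1 e2
  have hA : Δ ⬝ᵥ (Lap AH).mulVec Δ
      = Δ ⬝ᵥ (Lap AH).mulVec ft - Δ ⬝ᵥ (Lap AH).mulVec ft' := by
    rw [hΔdef, mulVec_sub, dotProduct_sub]
  have eqA : ((l:ℝ)*γ) * (Δ ⬝ᵥ (Lap AH).mulVec Δ) + (Δ ⬝ᵥ (IS S).mulVec Δ)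
      = (Δ ⬝ᵥ (IS S).mulVec (y - ft')) - (Δ ⬝ᵥ (IS S').mulVec (y - ft')) := by
    have hB : Δ ⬝ᵥ (IS S).mulVec Δ
        = Δ ⬝ᵥ (IS S).mulVec ft - Δ ⬝ᵥ (IS S).mulVec ft' := by
      rw [hΔdef, mulVec_sub, dotProduct_sub]
    have hC : Δ ⬝ᵥ (IS S).mulVec (y - ft')
        = Δ ⬝ᵥ (IS S).mulVec y - Δ ⬝ᵥ (IS S).mulVec ft' := by
      rw [mulVec_sub, dotProduct_sub]
    have hD : Δ ⬝ᵥ (IS S').mulVec (y - ft')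
        = Δ ⬝ᵥ (IS S').mulVec y - Δ ⬝ᵥ (IS S').mulVec ft' := by
      rw [mulVec_sub, dotProduct_sub]
    rw [hA, hB, hC, hD]
    linarith
  have eqB : (Δ ⬝ᵥ (IS S).mulVec (y - ft')) - (Δ ⬝ᵥ (IS S').mulVec (y - ft'))
      = Δ u * (y u - ft' u) - Δ v * (y v - ft' v) := by
    rw [IS_dot, IS_dot]
    have h1 := Finset.sum_sdiff (f := fun i => Δ i * (y - ft') i)
      (Finset.inter_subset_left (s₁ := S) (s₂ := S'))
    have h2 := Finset.sum_sdiff (f := fun i => Δ i * (y - ft') i)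
      (Finset.inter_subset_left (s₁ := S') (s₂ := S))
    rw [Finset.sdiff_inter_self_left, hu, Finset.sum_singleton] at h1
    rw [Finset.sdiff_inter_self_left, hv, Finset.sum_singleton] at h2
    rw [Finset.inter_comm] at h2
    simp only [Pi.sub_apply] at h1 h2 ⊢
    linarith
  have key : c * (vnorm Δ) ^ 2 ≤ Δ u * (y u - ft' u) + (-(Δ v)) * (y v - ft' v) := by
    have hq := hQ Δ hΔ0
    have hnn : 0 ≤ Δ ⬝ᵥ (IS S).mulVec Δ := by
      rw [IS_dot]; exact Finset.sum_nonneg fun i _ => mul_self_nonneg _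
    have := eqA.trans eqB
    rw [hNΔsq]
    linarith [this, hq, hnn]
  have habs : ∀ i, (y i - ft' i) ^ 2 ≤ (k + N') ^ 2 := by
    intro i
    have h1 : |ft' i| ≤ N' := by
      have hle : ft' i ^ 2 ≤ ∑ j, ft' j ^ 2 :=
        Finset.single_le_sum (f := fun j => ft' j ^ 2) (fun j _ => sq_nonneg _)
          (Finset.mem_univ i)
      calc |ft' i| = Real.sqrt (ft' i ^ 2) := (Real.sqrt_sq_eq_abs _).symm
        _ ≤ Real.sqrt (∑ j, ft' j ^ 2) := Real.sqrt_le_sqrt hle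
        _ = N' := rfl
    have hy1 := abs_le.mp (hy i)
    have hf1 := abs_le.mp h1
    have h2 : |y i - ft' i| ≤ k + N' := abs_le.mpr ⟨by linarith, by linarith⟩
    calc (y i - ft' i) ^ 2 = |y i - ft' i| ^ 2 := (sq_abs _).symm
      _ ≤ (k + N') ^ 2 := pow_le_pow_left₀ (abs_nonneg _) h2 2
  have hfinal1 : c * (vnorm Δ) ^ 2 ≤ vnorm Δ * (Real.sqrt 2 * (k + N')) := by
    have hcs := cauchy2 (Δ u) (-(Δ v)) (y u - ft' u) (y v - ft' v)
    have hL : Real.sqrt (Δ u ^ 2 + (-(Δ v)) ^ 2) ≤ vnorm Δ := by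
      have hsub : Δ u ^ 2 + (-(Δ v)) ^ 2 ≤ ∑ i, Δ i ^ 2 := by
        have h := Finset.sum_le_sum_of_subset_of_nonneg
          (Finset.subset_univ ({u, v} : Finset (Fin n))) (fun i _ _ => sq_nonneg (Δ i))
        rw [Finset.sum_pair huv] at h
        rw [neg_sq]; exact h
      exact Real.sqrt_le_sqrt hsub
    have hR : Real.sqrt ((y u - ft' u) ^ 2 + (y v - ft' v) ^ 2)
        ≤ Real.sqrt 2 * (k + N') := by
      calc Real.sqrt ((y u - ft' u) ^ 2 + (y v - ft' v) ^ 2)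
          ≤ Real.sqrt (2 * (k + N') ^ 2) := by
            apply Real.sqrt_le_sqrt; have := habs u; have := habs v; linarith
        _ = Real.sqrt 2 * (k + N') := by
            rw [Real.sqrt_mul (by norm_num), Real.sqrt_sq (by linarith)]
    calc c * (vnorm Δ) ^ 2 ≤ Δ u * (y u - ft' u) + (-(Δ v)) * (y v - ft' v) := key
      _ ≤ Real.sqrt (Δ u ^ 2 + (-(Δ v)) ^ 2)
          * Real.sqrt ((y u - ft' u) ^ 2 + (y v - ft' v) ^ 2) := hcs
      _ ≤ vnorm Δ * (Real.sqrt 2 * (k + N')) :=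
          mul_le_mul hL hR (Real.sqrt_nonneg _) hNΔ0
  have hΔle : vnorm Δ ≤ Real.sqrt 2 * (k + N') / c := by
    rcases eq_or_lt_of_le hNΔ0 with h | h
    · rw [← h]
      exact div_nonneg (mul_nonneg (Real.sqrt_nonneg _) (by linarith)) hc0.le
    · rw [le_div_iff₀ hc0]
      nlinarith [hfinal1]
  have hs2 : Real.sqrt 2 ≤ 1.5 := by
    rw [show (1.5:ℝ) = Real.sqrt (1.5 ^ 2) from (Real.sqrt_sq (by norm_num)).symm]
    exact Real.sqrt_le_sqrt (by norm_num)
  have hchain : vnorm Δ ≤ Real.sqrt 2 * k / c + Real.sqrt 2 * (k * Real.sqrt l) / c ^ 2 := by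
    calc vnorm Δ ≤ Real.sqrt 2 * (k + N') / c := hΔle
      _ ≤ Real.sqrt 2 * (k + k * Real.sqrt l / c) / c := by
          rw [div_le_div_iff_of_pos_right hc0]
          exact mul_le_mul_of_nonneg_left (by linarith [hbound']) (Real.sqrt_nonneg _)
      _ = Real.sqrt 2 * k / c + Real.sqrt 2 * (k * Real.sqrt l) / c ^ 2 := by
          field_simp
  have ht1 : Real.sqrt 2 * k / c ≤ Real.sqrt 2 * k / (c - 1) := by
    apply div_le_div_of_nonneg_left (mul_nonneg (Real.sqrt_nonneg _) hk) hcm (by linarith)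
  have ht2 : Real.sqrt 2 * (k * Real.sqrt l) / c ^ 2 ≤ 1.5 * k * Real.sqrt l / (c - 1) ^ 2 := by
    apply div_le_div₀ (by positivity) ?_ (by positivity) ?_
    · nlinarith [mul_nonneg hk hsl]
    · nlinarith
  calc vnorm Δ ≤ Real.sqrt 2 * k / c + Real.sqrt 2 * (k * Real.sqrt l) / c ^ 2 := hchain
    _ ≤ 1.5 * k * Real.sqrt l / (c - 1) ^ 2 + Real.sqrt 2 * k / (c - 1) := by linarith
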